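/- Let T be a numerical set with T ≠ ℕ satisfying: (a) F(T) ∉ T + T, and (b) for all x, y ∈ T with x, y ≤ F(T) and x + y > F(T), x + y − F(T) − 1 ∈ T. Then S = {F(T) + 1 − x : x ∈ T, x ≤ F(T) + 1} ∪ {n : n ≥ F(T) + 3} is a numerical semigroup. -/
import Mathlib


open Set

def IsNumericalSet (S : Set ℕ) : Prop := 0 ∈ S ∧ Sᶜ.Finite

def IsNumericalSemigroup (S : Set ℕ) : Prop :=
  IsNumericalSet S ∧ ∀ a ∈ S, ∀ b ∈ S, a + b ∈ S

/-- The associated set `A(S) = {s ∈ S : s + S ⊆ S}`. -/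
def A (S : Set ℕ) : Set ℕ := {s ∈ S | ∀ t ∈ S, s + t ∈ S}

/-- The Frobenius number: the largest gap of `S`. -/
noncomputable def F (S : Set ℕ) : ℕ := sSup Sᶜ

/-- The base: the largest element of `S` below `F S`. -/
noncomputable def B (S : Set ℕ) : ℕ := sSup {s | s ∈ S ∧ s < F S}

/-- The multiplicity: the smallest positive element of `S`. -/
noncomputable def m (S : Set ℕ) : ℕ := sInf {s | s ∈ S ∧ 0 < s}

/-- The complement numerical set (for `S ≠ ℕ`). -/
noncomputable def Stilde (S : Set ℕ) : Set ℕ :=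
  {x | ∃ s ∈ S, s ≤ B S ∧ x = B S - s} ∪ {n | B S ≤ n}

-- The complement operation, with the convention that the complement of ℕ is ℕ.
open Classical in
noncomputable def complOp (S : Set ℕ) : Set ℕ :=
  if S = Set.univ then Set.univ else Stilde S

/-- The genus: the number of gaps. -/
noncomputable def genus (S : Set ℕ) : ℕ := Sᶜ.ncard

/-- The number of boxes with hook length 1. -/
noncomputable def c1 (S : Set ℕ) : ℕ := {n | n ∈ S ∧ n + 1 ∉ S}.ncard

/-- An atom: a positive element not a sum of two positive elements. -/
def IsAtomOf (S : Set ℕ) (a : ℕ) : Prop :=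
  a ∈ S ∧ 0 < a ∧ ¬ ∃ x ∈ S, ∃ y ∈ S, 0 < x ∧ 0 < y ∧ a = x + y

/-- A small atom: an atom smaller than the Frobenius number. -/
def IsSmallAtom (S : Set ℕ) (a : ℕ) : Prop := IsAtomOf S a ∧ a < F S

/-- The embedding dimension: the number of atoms. -/
noncomputable def numAtoms (S : Set ℕ) : ℕ := {a | IsAtomOf S a}.ncard

/-- Maximal embedding dimension. -/
def MaxED (S : Set ℕ) : Prop := numAtoms S = m S


theorem explicit_semigroup_from_conditions (T : Set ℕ) (hT : IsNumericalSet T)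
    (hne : T ≠ Set.univ) (ha : ∀ x ∈ T, ∀ y ∈ T, x + y ≠ F T)
    (hb : ∀ x ∈ T, ∀ y ∈ T, x ≤ F T → y ≤ F T → F T < x + y → x + y - (F T + 1) ∈ T) :
    IsNumericalSemigroup
      ({y | ∃ x ∈ T, x ≤ F T + 1 ∧ y = F T + 1 - x} ∪ {n | F T + 3 ≤ n}) := by
  obtain ⟨h0, hfin⟩ := hT
  have hbdd : BddAbove Tᶜ := hfin.bddAbove
  have hgt : ∀ n, F T < n → n ∈ T := by
    intro n hn
    by_contra h
    exact absurd (le_csSup hbdd h) (not_le.mpr hn)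
  have hF1 : F T + 1 ∈ T := hgt _ (Nat.lt_succ_self _)
  constructor
  · constructor
    · left; exact ⟨F T + 1, hF1, le_refl _, by omega⟩
    · apply Set.Finite.subset (Set.finite_Iio (F T + 3))
      intro n hn
      simp only [Set.mem_compl_iff, Set.mem_union, Set.mem_setOf_eq, not_or] at hn
      exact Set.mem_Iio.mpr (by omega)
  · intro a haS b hbS
    rcases Nat.lt_or_ge (a + b) (F T + 3) with hlt | hge
    swap
    · right; exact hge
    have ha' : ∃ x ∈ T, x ≤ F T + 1 ∧ a = F T + 1 - x := by
      rcases haS with h | h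
      · exact h
      · exact absurd h (by simp only [Set.mem_setOf_eq]; omega)
    have hb' : ∃ y ∈ T, y ≤ F T + 1 ∧ b = F T + 1 - y := by
      rcases hbS with h | h
      · exact h
      · exact absurd h (by simp only [Set.mem_setOf_eq]; omega)
    obtain ⟨x, hx, hxle, hax⟩ := ha'
    obtain ⟨y, hy, hyle, hby⟩ := hb'
    by_cases hx1 : x = F T + 1
    · have : a = 0 := by omega
      rw [this, zero_add]; exact hbS
    by_cases hy1 : y = F T + 1
    · have : b = 0 := by omega
      rw [this, add_zero]; exact haS
    have hxF : x ≤ F T := by omega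
    have hyF : y ≤ F T := by omega
    have hne' : x + y ≠ F T := ha x hx y hy
    have hsum : F T + 1 ≤ x + y := by omega
    rcases eq_or_lt_of_le hsum with heq | hlt'
    · left; exact ⟨0, h0, by omega, by omega⟩
    · have hmem : x + y - (F T + 1) ∈ T := hb x hx y hy hxF hyF (by omega)
      left
      exact ⟨x + y - (F T + 1), hmem, by omega, by omega⟩
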